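/- arXiv:1611.05818 — 2 statements merged into one kernel-verified Lean document; each statement's English description precedes it below -/
import Mathlib

section
/- Let P be a nonempty closed subset of 2^ω with tree T_P, let σ ∈ T_P, and let n ≥ |σ|. If every extension τ ⪰ σ with τ ∈ T_P↾n satisfies θ_P(τ) ≥ θ_P(σ) + ℓ, then σ has at least 2^ℓ extensions in T_P↾n. -/
open MeasureTheory Filter

noncomputable section

/-- The cylinder (basic clopen set) determined by a finite binary string. -/
def cyl (σ : List Bool) : Set (ℕ → Bool) :=
  {X | ∀ i, i < σ.length → X i = σ.getD i false}

/-- σ is an extendible node of P, i.e. σ ∈ T_P. -/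
def extn (P : Set (ℕ → Bool)) (σ : List Bool) : Prop :=
  (cyl σ ∩ P).Nonempty

/-- The level-n strings of the tree of extendible nodes, T_P ↾ n. -/
def level (P : Set (ℕ → Bool)) (n : ℕ) : Set (List Bool) :=
  {σ | σ.length = n ∧ extn P σ}

/-- #(T_P ↾ n). -/
def levelCard (P : Set (ℕ → Bool)) (n : ℕ) : ℕ :=
  (level P n).ncard

/-- The clopen set [T_P ↾ n] generated by the level-n extendible nodes. -/
def levelUnion (P : Set (ℕ → Bool)) (n : ℕ) : Set (ℕ → Bool) :=
  ⋃ σ ∈ level P n, cyl σ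

/-- The prefix of σ of length m+1 with its last bit flipped, i.e. (σ↾(m+1))^↷. -/
def flipAt (σ : List Bool) (m : ℕ) : List Bool :=
  σ.take m ++ [!σ.getD m false]

/-- θ_P(σ): the number of initial segments of σ whose last-bit-flipped sibling is in T_P. -/
def theta (P : Set (ℕ → Bool)) (σ : List Bool) : ℕ :=
  {m | m < σ.length ∧ extn P (flipAt σ m)}.ncard

/-- The number of extensions of σ in T_P ↾ n. -/
def extCard (P : Set (ℕ → Bool)) (σ : List Bool) (n : ℕ) : ℕ :=
  {τ | τ.length = n ∧ extn P τ ∧ σ <+: τ}.ncard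

/-- X ↾ n as a finite string. -/
def prefixList (X : ℕ → Bool) (n : ℕ) : List Bool :=
  List.ofFn (fun i : Fin n => X i)

/-- Interleaving X ⊕ Y of two infinite sequences. -/
def seqInterleave (X Y : ℕ → Bool) : ℕ → Bool :=
  fun n => if n % 2 = 0 then X (n / 2) else Y (n / 2)

/-- Interleaving σ ⊕ τ of two finite strings (of equal length). -/
def interleave : List Bool → List Bool → List Bool
  | a :: σ, b :: τ => a :: b :: interleave σ τ
  | _, _ => []

/-- The product P₀ ⊗ P₁ = {X ⊕ Y : X ∈ P₀, Y ∈ P₁}. -/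
def prodClass (P₀ P₁ : Set (ℕ → Bool)) : Set (ℕ → Bool) :=
  {Z | ∃ X ∈ P₀, ∃ Y ∈ P₁, Z = seqInterleave X Y}



open Classical in
lemma extn_mono {P : Set (ℕ → Bool)} {σ τ : List Bool} (hpre : σ <+: τ)
    (h : extn P τ) : extn P σ := by
  obtain ⟨X, hX1, hX2⟩ := h
  refine ⟨X, ?_, hX2⟩
  intro i hi
  obtain ⟨t, rfl⟩ := hpre
  rw [hX1 i (by simp; omega), List.getD_append _ _ _ _ hi]

lemma extn_take {P : Set (ℕ → Bool)} {τ : List Bool} (m : ℕ)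
    (h : extn P τ) : extn P (τ.take m) :=
  extn_mono (List.take_prefix m τ) h

lemma prefixList_length (X : ℕ → Bool) (n : ℕ) : (prefixList X n).length = n := by
  simp [prefixList]

lemma getD_prefixList (X : ℕ → Bool) (n i : ℕ) (hi : i < n) :
    (prefixList X n).getD i false = X i := by
  rw [List.getD_eq_getElem _ _ (by simp [prefixList]; omega)]
  simp [prefixList]

lemma extn_exists_level {P : Set (ℕ → Bool)} {σ : List Bool} {n : ℕ}
    (hσ : extn P σ) (hn : σ.length ≤ n) :
    ∃ τ, τ.length = n ∧ extn P τ ∧ σ <+: τ := by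
  obtain ⟨X, hX1, hX2⟩ := hσ
  refine ⟨prefixList X n, prefixList_length X n, ⟨X, ?_, hX2⟩, ?_⟩
  · intro i hi
    rw [prefixList_length] at hi
    rw [getD_prefixList X n i hi]
  · refine List.prefix_iff_eq_take.mpr (List.ext_getElem ?_ ?_)
    · simp [prefixList]; omega
    · intro i h1 h2
      have hi : i < σ.length := h1
      have hi' : i < (prefixList X n).length := by simp [prefixList]; omega
      have e1 : (List.take σ.length (prefixList X n))[i] = (prefixList X n)[i]'hi' :=
        List.getElem_take
      rw [e1]
      have : (prefixList X n)[i]'hi' = X i := by simp [prefixList]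
      rw [this, hX1 i hi, List.getD_eq_getElem _ _ hi]

lemma finite_length_eq (n : ℕ) : {τ : List Bool | τ.length = n}.Finite := by
  apply Set.Finite.subset (Set.finite_range (List.ofFn : (Fin n → Bool) → List Bool))
  intro l hl
  have hl' : l.length = n := hl
  refine ⟨fun i => l.getD i false, ?_⟩
  refine List.ext_getElem (by simp [hl']) ?_
  intro i h1 h2
  have : i < l.length := h2
  simp [List.getD_eq_getElem?_getD, List.getElem?_eq_getElem this]

lemma finite_ext (P : Set (ℕ → Bool)) (σ : List Bool) (n : ℕ) :
    {τ : List Bool | τ.length = n ∧ extn P τ ∧ σ <+: τ}.Finite :=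
  (finite_length_eq n).subset (fun τ hτ => hτ.1)

open Classical in
lemma theta_eq (P : Set (ℕ → Bool)) (σ : List Bool) :
    theta P σ = ((Finset.range σ.length).filter (fun m => extn P (flipAt σ m))).card := by
  rw [theta, ← Set.ncard_coe_finset]
  congr 1
  ext m
  simp

lemma flipAt_congr {l₁ l₂ : List Bool} {m : ℕ} (h : l₁.take (m+1) = l₂.take (m+1)) :
    flipAt l₁ m = flipAt l₂ m := by
  have ht : l₁.take m = l₂.take m := by
    have := congrArg (List.take m) h
    rwa [List.take_take, List.take_take, Nat.min_eq_left (Nat.le_succ m)] at this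
  have hg : l₁[m]? = l₂[m]? := by
    have := congrArg (fun l => l[m]?) h
    simpa [List.getElem?_take_of_lt (Nat.lt_succ_self m)] using this
  simp [flipAt, List.getD_eq_getElem?_getD, ht, hg]

lemma flipAt_prefix_eq {σ τ : List Bool} {m : ℕ} (hpre : σ <+: τ) (hm : m < σ.length) :
    flipAt τ m = flipAt σ m := by
  apply flipAt_congr
  obtain ⟨t, rfl⟩ := hpre
  exact List.take_append_of_le_length hm

open Classical in
lemma theta_prefix (P : Set (ℕ → Bool)) {σ τ : List Bool} (hpre : σ <+: τ) :
    theta P τ = theta P σ +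
      ((Finset.Ico σ.length τ.length).filter (fun m => extn P (flipAt τ m))).card := by
  have hlen : σ.length ≤ τ.length := hpre.length_le
  rw [theta_eq, theta_eq]
  have hsplit : Finset.range τ.length =
      Finset.range σ.length ∪ Finset.Ico σ.length τ.length := by
    simp only [Finset.range_eq_Ico]
    exact (Finset.Ico_union_Ico_eq_Ico (Nat.zero_le _) hlen).symm
  rw [hsplit, Finset.filter_union, Finset.card_union_of_disjoint]
  · congr 1
    have : (Finset.range σ.length).filter (fun m => extn P (flipAt τ m)) =
        (Finset.range σ.length).filter (fun m => extn P (flipAt σ m)) := by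
      apply Finset.filter_congr
      intro m hm
      rw [flipAt_prefix_eq hpre (Finset.mem_range.mp hm)]
    rw [this]
  · apply Finset.disjoint_filter_filter
    rw [Finset.range_eq_Ico]
    exact Finset.Ico_disjoint_Ico_consecutive 0 σ.length τ.length

theorem stmt3 (P : Set (ℕ → Bool)) (hPne : P.Nonempty) (hPc : IsClosed P)
    (σ : List Bool) (hσ : extn P σ) (n ℓ : ℕ) (hn : σ.length ≤ n)
    (h : ∀ τ : List Bool, τ.length = n → extn P τ → σ <+: τ →
      theta P σ + ℓ ≤ theta P τ) :
    2 ^ ℓ ≤ extCard P σ n := by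
  classical
  induction ℓ generalizing σ with
  | zero =>
    obtain ⟨τ, hτl, hτe, hτp⟩ := extn_exists_level hσ hn
    have hne : {τ | τ.length = n ∧ extn P τ ∧ σ <+: τ}.Nonempty := ⟨τ, hτl, hτe, hτp⟩
    have := Set.ncard_pos (finite_ext P σ n) |>.mpr hne
    simp only [pow_zero, extCard]
    exact this
  | succ ℓ ih =>
    -- pick a level-n extension τ of σ
    obtain ⟨τ, hτl, hτe, hτp⟩ := extn_exists_level hσ hn
    have hθτ := h τ hτl hτe hτp
    have hθsplit := theta_prefix P hτp
    set S : Finset ℕ := (Finset.Ico σ.length τ.length).filter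
      (fun m => extn P (flipAt τ m)) with hS
    have hScard : ℓ + 1 ≤ S.card := by omega
    have hSne : S.Nonempty := Finset.card_pos.mp (by omega)
    set m := S.min' hSne with hm
    have hmS : m ∈ S := S.min'_mem hSne
    have hmIco : σ.length ≤ m ∧ m < τ.length := by
      have := Finset.mem_filter.mp hmS
      exact Finset.mem_Ico.mp this.1
    have hmext : extn P (flipAt τ m) := (Finset.mem_filter.mp hmS).2
    have hmn : m < n := hτl ▸ hmIco.2
    -- the two children at the branch point
    set ρ₀ : List Bool := τ.take (m+1) with hρ₀
    set ρ₁ : List Bool := flipAt τ m with hρ₁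
    have hρ₀l : ρ₀.length = m + 1 := by
      simp [hρ₀, List.length_take]; omega
    have hρ₁l : ρ₁.length = m + 1 := by
      simp [hρ₁, flipAt, List.length_take]; omega
    have hρ₀pre : ρ₀ <+: τ := List.take_prefix _ _
    have hσρ₀ : σ <+: ρ₀ :=
      (List.prefix_take_iff).mpr ⟨hτp, by omega⟩
    have hσtm : σ <+: τ.take m :=
      (List.prefix_take_iff).mpr ⟨hτp, by omega⟩
    have hσρ₁ : σ <+: ρ₁ := hσtm.trans (by rw [hρ₁, flipAt]; exact List.prefix_append _ _)
    have hρ₀e : extn P ρ₀ := extn_take _ hτe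
    have hρ₁e : extn P ρ₁ := hmext
    have htake_tm : (τ.take m).length = m := by
      rw [List.length_take]; omega
    -- flipAt agreement for x < m on both children
    have hflip₀ : ∀ x, x < m → flipAt ρ₀ x = flipAt τ x := by
      intro x hx
      exact (flipAt_prefix_eq hρ₀pre (by omega)).symm
    have hflip₁ : ∀ x, x < m → flipAt ρ₁ x = flipAt τ x := by
      intro x hx
      apply flipAt_congr
      rw [hρ₁, flipAt]
      rw [List.take_append_of_le_length (by omega)]
      rw [List.take_take]
      congr 1
      omega
    have hmin : ∀ x, σ.length ≤ x → x < m → ¬ extn P (flipAt τ x) := by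
      intro x hx1 hx2 hx3
      have : x ∈ S := Finset.mem_filter.mpr ⟨Finset.mem_Ico.mpr ⟨hx1, by omega⟩, hx3⟩
      have := S.min'_le x this
      omega
    -- flipAt ρ₀ m  = ρ₁ and flipAt ρ₁ m = ρ₀
    have hρ₀take : ρ₀.take m = τ.take m := by
      rw [hρ₀, List.take_take]; congr 1; omega
    have hρ₀getD : ρ₀.getD m false = τ.getD m false := by
      rw [List.getD_eq_getElem?_getD, List.getD_eq_getElem?_getD, hρ₀,
        List.getElem?_take_of_lt (Nat.lt_succ_self m)]
    have hρ₁take : ρ₁.take m = τ.take m := by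
      rw [hρ₁, flipAt, List.take_append_of_le_length (by omega), List.take_take]
      congr 1; omega
    have hρ₁getD : ρ₁.getD m false = !τ.getD m false := by
      rw [hρ₁, flipAt, List.getD_append_right _ _ _ _ (by omega)]
      simp [htake_tm]
    have hτtake_succ : τ.take (m+1) = τ.take m ++ [τ.getD m false] := by
      rw [List.take_succ]
      congr 1
      have hmlt : m < τ.length := hmIco.2
      rw [List.getElem?_eq_getElem hmlt]
      simp [List.getD_eq_getElem?_getD, List.getElem?_eq_getElem hmlt]
    have hflipρ₀m : flipAt ρ₀ m = ρ₁ := by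
      rw [flipAt, hρ₀take, hρ₀getD, hρ₁, flipAt]
    have hflipρ₁m : flipAt ρ₁ m = ρ₀ := by
      rw [flipAt, hρ₁take, hρ₁getD, Bool.not_not, hρ₀, hτtake_succ]
    -- theta of the children
    have hθchild : ∀ ρ : List Bool, ρ.length = m + 1 → σ <+: ρ →
        (∀ x, x < m → flipAt ρ x = flipAt τ x) → extn P (flipAt ρ m) →
        theta P ρ = theta P σ + 1 := by
      intro ρ hl hpre hfl hfm
      rw [theta_prefix P hpre, hl]
      congr 1
      have : (Finset.Ico σ.length (m+1)).filter (fun x => extn P (flipAt ρ x)) = {m} := by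
        apply Finset.eq_singleton_iff_unique_mem.mpr
        constructor
        · exact Finset.mem_filter.mpr ⟨Finset.mem_Ico.mpr ⟨by omega, by omega⟩, hfm⟩
        · intro x hx
          obtain ⟨hx1, hx2⟩ := Finset.mem_filter.mp hx
          obtain ⟨hx3, hx4⟩ := Finset.mem_Ico.mp hx1
          by_contra hne
          have hxm : x < m := by omega
          rw [hfl x hxm] at hx2
          exact hmin x hx3 hxm hx2
      rw [this, Finset.card_singleton]
    have hθρ₀ : theta P ρ₀ = theta P σ + 1 :=
      hθchild ρ₀ hρ₀l hσρ₀ hflip₀ (hflipρ₀m ▸ hρ₁e)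
    have hθρ₁ : theta P ρ₁ = theta P σ + 1 :=
      hθchild ρ₁ hρ₁l hσρ₁ hflip₁ (hflipρ₁m ▸ hρ₀e)
    -- apply the IH to both children
    have happly : ∀ ρ : List Bool, ρ.length = m + 1 → σ <+: ρ → extn P ρ →
        theta P ρ = theta P σ + 1 → 2 ^ ℓ ≤ extCard P ρ n := by
      intro ρ hl hpre he hθ
      apply ih ρ he (by omega)
      intro τ' hτ'l hτ'e hτ'p
      have := h τ' hτ'l hτ'e (hpre.trans hτ'p)
      omega
    have h₀ := happly ρ₀ hρ₀l hσρ₀ hρ₀e hθρ₀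
    have h₁ := happly ρ₁ hρ₁l hσρ₁ hρ₁e hθρ₁
    -- the two extension sets are disjoint subsets of the σ-extension set
    set A := {τ' : List Bool | τ'.length = n ∧ extn P τ' ∧ ρ₀ <+: τ'} with hA
    set B := {τ' : List Bool | τ'.length = n ∧ extn P τ' ∧ ρ₁ <+: τ'} with hB
    have hdisj : Disjoint A B := by
      rw [Set.disjoint_left]
      rintro τ' ⟨_, _, h0⟩ ⟨_, _, h1⟩
      have e0 : τ'.take (m+1) = ρ₀ := by
        rw [List.prefix_iff_eq_take.mp h0, hρ₀l]
      have e1 : τ'.take (m+1) = ρ₁ := by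
        rw [List.prefix_iff_eq_take.mp h1, hρ₁l]
      have : ρ₀ = ρ₁ := e0 ▸ e1
      have : ρ₀.getD m false = ρ₁.getD m false := by rw [this]
      rw [hρ₀getD, hρ₁getD] at this
      simp at this
    have hsub : A ∪ B ⊆ {τ' : List Bool | τ'.length = n ∧ extn P τ' ∧ σ <+: τ'} := by
      rintro τ' (⟨h1, h2, h3⟩ | ⟨h1, h2, h3⟩)
      · exact ⟨h1, h2, hσρ₀.trans h3⟩
      · exact ⟨h1, h2, hσρ₁.trans h3⟩
    have hAfin : A.Finite := finite_ext P ρ₀ n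
    have hBfin : B.Finite := finite_ext P ρ₁ n
    have hcard : extCard P σ n ≥ A.ncard + B.ncard := by
      rw [← Set.ncard_union_eq hdisj hAfin hBfin]
      exact Set.ncard_le_ncard hsub (finite_ext P σ n)
    have : extCard P ρ₀ n = A.ncard := rfl
    have : extCard P ρ₁ n = B.ncard := rfl
    calc 2 ^ (ℓ + 1) = 2 ^ ℓ + 2 ^ ℓ := by ring
    _ ≤ A.ncard + B.ncard := Nat.add_le_add h₀ h₁
    _ ≤ extCard P σ n := hcard
end
end

section
/- Let P be a closed subset of 2^ω of positive Lebesgue measure, let X ∈ P, and suppose the lower dyadic density ρ(P | X) > 2^{-k}. Then there is a constant N such that θ_P(X↾n) ≥ n/k − N for all n. In particular, for every sufficiently large ℓ, among any k consecutive levels ℓ+1, …, ℓ+k there is some i with both X↾(ℓ+i) ∈ T_P and (X↾(ℓ+i))^↷ ∈ T_P. -/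
open MeasureTheory Filter

noncomputable section

lemma prefixList_getD (X : ℕ → Bool) {n i : ℕ} (h : i < n) :
    (prefixList X n).getD i false = X i := by
  rw [List.getD_eq_getElem _ _ (by simpa [prefixList_length] using h)]
  simp [prefixList]

lemma mem_cyl_prefixList_iff (X Z : ℕ → Bool) (n : ℕ) :
    Z ∈ cyl (prefixList X n) ↔ ∀ i, i < n → Z i = X i := by
  constructor
  · intro h i hi
    rw [h i (by simpa [prefixList_length] using hi), prefixList_getD X hi]
  · intro h i hi
    rw [prefixList_length] at hi
    rw [h i hi, prefixList_getD X hi]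

lemma prefixList_take (X : ℕ → Bool) {m n : ℕ} (h : m ≤ n) :
    (prefixList X n).take m = prefixList X m := by
  apply List.ext_getElem
  · simp [prefixList, h]
  · intro i h1 h2
    simp [prefixList]

lemma flipAt_prefixList (X : ℕ → Bool) {m n : ℕ} (h : m < n) :
    flipAt (prefixList X n) m = prefixList X m ++ [!X m] := by
  rw [flipAt, prefixList_take X h.le, prefixList_getD X h]

lemma mem_cyl_append_iff (X Z : ℕ → Bool) (n : ℕ) (b : Bool) :
    Z ∈ cyl (prefixList X n ++ [b]) ↔ (∀ i, i < n → Z i = X i) ∧ Z n = b := by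
  constructor
  · intro h
    constructor
    · intro i hi
      have := h i (by simp [prefixList_length]; omega)
      rwa [List.getD_append _ _ _ _ (by simpa [prefixList_length] using hi), prefixList_getD X hi] at this
    · have := h n (by simp [prefixList_length])
      rw [List.getD_eq_getElem _ _ (by simp [prefixList_length]), List.getElem_append_right (by simp [prefixList_length])] at this
      simpa [prefixList_length] using this
  · rintro ⟨h1, h2⟩ i hi
    simp [prefixList_length] at hi
    rcases lt_or_eq_of_le hi with hi' | hi'
    · rw [List.getD_append _ _ _ _ (by simpa [prefixList_length] using hi'), prefixList_getD X hi', h1 i hi']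
    · subst hi'
      rw [h2, List.getD_eq_getElem _ _ (by simp [prefixList_length]), List.getElem_append_right (by simp [prefixList_length])]
      simp [prefixList_length]

lemma mem_cyl_prefixList_self (X : ℕ → Bool) (n : ℕ) : X ∈ cyl (prefixList X n) :=
  (mem_cyl_prefixList_iff X X n).mpr (fun _ _ => rfl)

lemma extn_prefixList {P : Set (ℕ → Bool)} {X : ℕ → Bool} (hX : X ∈ P) (n : ℕ) :
    extn P (prefixList X n) := ⟨X, mem_cyl_prefixList_self X n, hX⟩

/-- single step: if the sibling at level n+1 is not extendible, P∩cyl shrinks not at all -/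
lemma step_eq {P : Set (ℕ → Bool)} {X : ℕ → Bool} {n : ℕ}
    (h : ¬ extn P (prefixList X n ++ [!X n])) :
    P ∩ cyl (prefixList X (n + 1)) = P ∩ cyl (prefixList X n) := by
  apply Set.Subset.antisymm
  · refine Set.inter_subset_inter_right _ (fun Z hZ => ?_)
    rw [mem_cyl_prefixList_iff] at hZ ⊢
    intro i hi; exact hZ i (by omega)
  · rintro Z ⟨hZP, hZc⟩
    rw [mem_cyl_prefixList_iff] at hZc
    refine ⟨hZP, ?_⟩
    rw [mem_cyl_prefixList_iff]
    intro i hi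
    rcases Nat.lt_succ_iff_lt_or_eq.mp hi with hi' | hi'
    · exact hZc i hi'
    · subst hi'
      by_contra hne
      have hzn : Z i = !X i := by cases hx : Z i <;> cases hy : X i <;> simp_all
      exact h ⟨Z, (mem_cyl_append_iff X Z i (!X i)).mpr ⟨hZc, hzn⟩, hZP⟩

lemma window_eq {P : Set (ℕ → Bool)} {X : ℕ → Bool} {ℓ : ℕ} (i : ℕ)
    (h : ∀ j, j < i → ¬ extn P (prefixList X (ℓ + j) ++ [!X (ℓ + j)])) :
    P ∩ cyl (prefixList X (ℓ + i)) = P ∩ cyl (prefixList X ℓ) := by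
  induction i with
  | zero => rfl
  | succ i ih =>
      rw [show ℓ + (i+1) = (ℓ + i) + 1 from rfl,
        step_eq (h i (Nat.lt_succ_self i)), ih (fun j hj => h j (by omega))]

lemma windows {P : Set (ℕ → Bool)} {μ : Measure (ℕ → Bool)}
    (hμ : ∀ σ : List Bool, μ (cyl σ) = (1/2 : ENNReal) ^ σ.length)
    {X : ℕ → Bool} {k N : ℕ}
    (hN : ∀ n, N ≤ n → (1/2 : ENNReal) ^ k <
      μ (P ∩ cyl (prefixList X n)) / μ (cyl (prefixList X n)))
    {ℓ : ℕ} (hℓ : N ≤ ℓ) :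
    ∃ i : ℕ, 1 ≤ i ∧ i ≤ k ∧ extn P (prefixList X (ℓ + i - 1) ++ [!X (ℓ + i - 1)]) := by
  by_contra hcon
  push_neg at hcon
  have hall : ∀ j, j < k → ¬ extn P (prefixList X (ℓ + j) ++ [!X (ℓ + j)]) := by
    intro j hj h
    exact hcon (j + 1) (by omega) (by omega) (by
      have : ℓ + (j + 1) - 1 = ℓ + j := by omega
      rwa [this])
  have heq := window_eq k hall
  have h2 : (1/2 : ENNReal) ^ ℓ ≠ 0 := pow_ne_zero _ (by norm_num)
  have h2' : (1/2 : ENNReal) ^ ℓ ≠ ⊤ := by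
    exact ENNReal.pow_ne_top (by norm_num)
  have hlt := hN ℓ hℓ
  rw [hμ, prefixList_length] at hlt
  rw [ENNReal.lt_div_iff_mul_lt (Or.inl h2) (Or.inl h2'), ← pow_add] at hlt
  have hle : μ (P ∩ cyl (prefixList X ℓ)) ≤ (1/2 : ENNReal) ^ (ℓ + k) := by
    rw [← heq]
    calc μ (P ∩ cyl (prefixList X (ℓ + k))) ≤ μ (cyl (prefixList X (ℓ + k))) :=
          measure_mono Set.inter_subset_right
      _ = (1/2 : ENNReal) ^ (ℓ + k) := by rw [hμ, prefixList_length]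
  rw [Nat.add_comm k ℓ] at hlt
  exact absurd hle (not_le.mpr hlt)

lemma theta_count {P : Set (ℕ → Bool)} {X : ℕ → Bool} {k N : ℕ} (hk : 1 ≤ k)
    (hw : ∀ ℓ, N ≤ ℓ → ∃ i : ℕ, 1 ≤ i ∧ i ≤ k ∧
      extn P (prefixList X (ℓ + i - 1) ++ [!X (ℓ + i - 1)]))
    (n : ℕ) : n ≤ k * (theta P (prefixList X n) + (N + 1)) := by
  classical
  have h := fun j : ℕ => hw (N + j * k) (Nat.le_add_right _ _)
  choose i hi1 hik hext using h
  set f : ℕ → ℕ := fun j => N + j * k + i j - 1 with hf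
  set t := (n - N) / k with ht
  set S : Set ℕ := {m | m < (prefixList X n).length ∧ extn P (flipAt (prefixList X n) m)} with hS
  have hfb : ∀ j, N + j * k ≤ f j ∧ f j ≤ N + j * k + k - 1 := by
    intro j
    have := hi1 j; have := hik j
    constructor <;> simp only [hf] <;> omega
  have htk : t * k ≤ n - N := Nat.div_mul_le_self _ _
  have hflt : ∀ j, j < t → f j < n := by
    intro j hj
    have h1 := hi1 j
    have h2 := hik j
    have h3 : j * k + k ≤ t * k := by
      calc j * k + k = (j + 1) * k := by ring
        _ ≤ t * k := Nat.mul_le_mul_right k (by omega)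
    simp only [hf]
    omega
  have himg : f '' (Set.Iio t) ⊆ S := by
    rintro m ⟨j, hj, rfl⟩
    refine ⟨by rw [prefixList_length]; exact hflt j hj, ?_⟩
    rw [flipAt_prefixList X (hflt j hj)]
    exact hext j
  have hinj : Set.InjOn f (Set.Iio t) := by
    have hmono : StrictMono f := by
      intro a b hab
      have h1 := hik a
      have h2 := hi1 b
      have h3 : a * k + k ≤ b * k := by
        calc a * k + k = (a + 1) * k := by ring
          _ ≤ b * k := Nat.mul_le_mul_right k (by omega)
      simp only [hf]
      omega
    exact hmono.injective.injOn
  have hSfin : S.Finite := Set.Finite.subset (Set.finite_Iio n) (by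
    intro m hm; exact lt_of_lt_of_le hm.1 (by rw [prefixList_length]))
  have hcard : t ≤ theta P (prefixList X n) := by
    have h1 : (f '' (Set.Iio t)).ncard = t := by
      rw [Set.ncard_image_of_injOn hinj, Set.ncard_eq_toFinset_card']
      simp
    have h2 := Set.ncard_le_ncard himg hSfin
    rw [h1] at h2
    exact h2
  have hmod : n - N = k * t + (n - N) % k := by
    rw [ht]; exact (Nat.div_add_mod _ _).symm
  have hmlt : (n - N) % k < k := Nat.mod_lt _ (by omega)
  have h3 : k * t ≤ k * theta P (prefixList X n) := Nat.mul_le_mul_left k hcard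
  have h4 : N ≤ k * N := Nat.le_mul_of_pos_left N (by omega)
  calc n ≤ N + k * t + (k - 1) := by omega
    _ ≤ k * N + k * theta P (prefixList X n) + k := by omega
    _ = k * (theta P (prefixList X n) + (N + 1)) := by ring


theorem stmt16 (P : Set (ℕ → Bool)) (hPc : IsClosed P)
    (μ : Measure (ℕ → Bool))
    (hμ : ∀ σ : List Bool, μ (cyl σ) = (1/2 : ENNReal) ^ σ.length)
    (hpos : 0 < μ P) (X : ℕ → Bool) (hX : X ∈ P) (k : ℕ)
    (hdens : (1/2 : ENNReal) ^ k <
      liminf (fun n => μ (P ∩ cyl (prefixList X n)) / μ (cyl (prefixList X n))) atTop) :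
    (∃ N : ℕ, ∀ n : ℕ, n ≤ k * (theta P (prefixList X n) + N)) ∧
    (∃ N : ℕ, ∀ ℓ : ℕ, N ≤ ℓ → ∃ i : ℕ, 1 ≤ i ∧ i ≤ k ∧
      extn P (prefixList X (ℓ + i)) ∧
      extn P (flipAt (prefixList X (ℓ + i)) (ℓ + i - 1))) := by
  
  have hev : ∀ᶠ n in atTop, (1/2 : ENNReal) ^ k <
      μ (P ∩ cyl (prefixList X n)) / μ (cyl (prefixList X n)) :=
    eventually_lt_of_lt_liminf hdens
  obtain ⟨N, hN⟩ := eventually_atTop.mp hev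
  have hw : ∀ ℓ, N ≤ ℓ → ∃ i : ℕ, 1 ≤ i ∧ i ≤ k ∧
      extn P (prefixList X (ℓ + i - 1) ++ [!X (ℓ + i - 1)]) :=
    fun ℓ hℓ => windows hμ hN hℓ
  have hk : 1 ≤ k := by
    obtain ⟨i, h1, h2, _⟩ := hw N le_rfl
    omega
  constructor
  · exact ⟨N + 1, theta_count hk hw⟩
  · refine ⟨N, fun ℓ hℓ => ?_⟩
    obtain ⟨i, h1, h2, h3⟩ := hw ℓ hℓ
    refine ⟨i, h1, h2, extn_prefixList hX _, ?_⟩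
    rw [flipAt_prefixList X (show ℓ + i - 1 < ℓ + i by omega)]
    have : ℓ + i - 1 + 1 = ℓ + i := by omega
    exact h3
end
end
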